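/- The non-adaptive querying decision problem with partition queries is NP-hard: there is a polynomial-time reduction from Set Cover such that (U, S, K) admits a set cover of size ≤ K if and only if the constructed persuasion instance admits a set of ≤ K partition queries whose induced common refinement completely separates all receiver types (every cell of the refinement is a singleton). -/

import Mathlib

/-- The cell of the partition query `q_s` (for a subset `s ⊆ U`) containing receiver
type `τ` in the Set-Cover gadget: the types are `Option U`, where `none` is `τ_∅` and
`some e` is `τ_e`.  Query `q_s` has singleton cells `{τ_e}` for `e ∈ s` and one big cell
consisting of `τ_∅` together with all `τ_e` for `e ∉ s`. -/
def cellQ {U : Type} (s : Set U) (τ : Option U) : Set (Option U) :=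
  {τ' | (∃ e ∈ s, τ = some e ∧ τ' = τ) ∨
    ((¬ ∃ e ∈ s, τ = some e) ∧ ¬ ∃ e ∈ s, τ' = some e)}

lemma self_mem_cellQ {U : Type} (s : Set U) (τ : Option U) : τ ∈ cellQ s τ := by
  by_cases h : ∃ e ∈ s, τ = some e
  · obtain ⟨e, he, hτ⟩ := h
    exact Or.inl ⟨e, he, hτ, rfl⟩
  · exact Or.inr ⟨h, h⟩

/-- NP-hardness reduction correctness (decision-problem equivalence): the Set-Cover
instance `(U, S, K)` admits a cover of size at most `K` if and only if the constructed
persuasion instance admits at most `K` partition queries from `{q_s : s ∈ S}` whose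
common refinement completely separates all receiver types (every common-refinement cell
is a singleton). -/
theorem stmt10 (U : Type) [Fintype U] (S : Finset (Set U)) (K : ℕ) :
    (∃ C : Finset (Set U), C ⊆ S ∧ C.card ≤ K ∧ ∀ e : U, ∃ s ∈ C, e ∈ s) ↔
    (∃ C : Finset (Set U), C ⊆ S ∧ C.card ≤ K ∧
      ∀ τ : Option U, (⋂ s ∈ C, cellQ s τ) = {τ}) := by
  constructor
  · rintro ⟨C, hCS, hK, hcov⟩
    refine ⟨C, hCS, hK, fun τ => ?_⟩
    apply Set.eq_singleton_iff_unique_mem.mpr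
    constructor
    · exact Set.mem_iInter₂.mpr fun s _ => self_mem_cellQ s τ
    · intro τ' hτ'
      rw [Set.mem_iInter₂] at hτ'
      match τ with
      | some e =>
        obtain ⟨s, hsC, hes⟩ := hcov e
        rcases hτ' s hsC with ⟨_, _, _, h⟩ | ⟨h, _⟩
        · exact h
        · exact absurd ⟨e, hes, rfl⟩ h
      | none =>
        match τ' with
        | none => rfl
        | some e' =>
          obtain ⟨s, hsC, hes⟩ := hcov e'
          rcases hτ' s hsC with ⟨_, _, h, _⟩ | ⟨_, h⟩
          · exact absurd h (by simp)
          · exact absurd ⟨e', hes, rfl⟩ h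
  · rintro ⟨C, hCS, hK, hsep⟩
    refine ⟨C, hCS, hK, fun e => ?_⟩
    by_contra h
    push_neg at h
    have hnone : (none : Option U) ∈ ⋂ s ∈ C, cellQ s (some e) := by
      refine Set.mem_iInter₂.mpr fun s hsC => ?_
      refine Or.inr ⟨?_, ?_⟩
      · rintro ⟨e', he', heq⟩
        exact h s hsC (Option.some_injective _ heq ▸ he')
      · rintro ⟨e', _, heq⟩
        exact absurd heq (by simp)
    rw [hsep (some e)] at hnone
    exact absurd hnone (by simp)
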